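/- arXiv:2009.07028 — 2 statements merged into one kernel-verified Lean document; each statement's English description precedes it below -/
import Mathlib

section
/- Let D ≡ 0 or 1 (mod 4) be a non-square integer, d = |D|, and let s₁, s₂ be positive integers with gcd(d·s₁, s₂) = 1 such that the number of prime divisors of s₂ (with multiplicity) with Kronecker symbol (D/q) = -1 is odd. Then M' = d·s₁ + s₂ has a prime divisor q' with (D/q') = -1 and gcd(q', s₁·s₂) = 1; in particular q' ≤ d·s₁ + s₂. -/
open scoped NumberTheorySymbols

/-- Kronecker symbol `(D/q)` at a prime `q`, for discriminants `D ≡ 0,1 (mod 4)`. -/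
def kron (D : ℤ) (q : ℕ) : ℤ :=
  if q = 2 then (if D % 8 = 1 then 1 else if D % 8 = 5 then -1 else 0)
  else jacobiSym D q


/-- `Ω_D⁻(n)`: number of prime divisors of `n`, with multiplicity, lying in `P(D)`. -/
def OmegaMinus (D : ℤ) (n : ℕ) : ℕ :=
  ((n.primeFactorsList).filter (fun q => kron D q = -1)).length

private lemma neg_one_pow_congr' {a b : ℕ} (h : a % 2 = b % 2) :
    ((-1 : ℤ)) ^ a = (-1) ^ b := by
  rcases Nat.even_or_odd a with ha | ha
  · have hb : Even b := Nat.even_iff.mpr (by rw [← h]; exact Nat.even_iff.mp ha)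
    rw [ha.neg_one_pow, hb.neg_one_pow]
  · have hb : Odd b := Nat.odd_iff.mpr (by rw [← h]; exact Nat.odd_iff.mp ha)
    rw [ha.neg_one_pow, hb.neg_one_pow]

/-- Reciprocity for `D ≡ 1 (mod 4)` (either sign): `J(D|b) = J(b | |D|)`. -/
private lemma jacobi_flip {D : ℤ} (hD1 : D % 4 = 1) {b : ℕ} (hb : Odd b) :
    J(D | b) = J((b : ℤ) | D.natAbs) := by
  set d := D.natAbs with hd
  have hcast : ((d : ℤ) = D) ∨ ((d : ℤ) = -D) := by
    rcases Int.natAbs_eq D with h | h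
    · exact Or.inl h.symm
    · exact Or.inr (by rw [h]; ring)
  rcases hcast with h | h
  · have hd4 : d % 4 = 1 := by
      have : ((d % 4 : ℕ) : ℤ) = 1 := by push_cast; rw [h]; exact hD1
      exact_mod_cast this
    rw [show D = ((d : ℕ) : ℤ) from h.symm]
    exact jacobiSym.quadratic_reciprocity_one_mod_four hd4 hb
  · -- D = -d, d ≡ 3 mod 4
    have hd4 : d % 4 = 3 := by
      have h1 : ((d % 4 : ℕ) : ℤ) = (d : ℤ) % 4 := by push_cast; ring_nf
      have h2 : (d : ℤ) % 4 = 3 := by omega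
      omega
    have hdodd : Odd d := Nat.odd_iff.mpr (by omega)
    have hDd : D = -((d : ℕ) : ℤ) := by omega
    rw [hDd, jacobiSym.neg _ hb, jacobiSym.quadratic_reciprocity hdodd hb,
      ZMod.χ₄_eq_neg_one_pow (Nat.odd_iff.mp hb)]
    have hd2 : Odd (d / 2) := Nat.odd_iff.mpr (by omega)
    rw [pow_mul, hd2.neg_one_pow]
    have hb2 : ((-1 : ℤ)) ^ (b / 2) * ((-1) ^ (b / 2) * J((b : ℤ) | d)) = J((b : ℤ) | d) := by
      rw [← mul_assoc, ← pow_add, neg_one_pow_congr' (show (b / 2 + b / 2) % 2 = 0 % 2 by omega),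
        pow_zero, one_mul]
    rw [hb2]

/-- `kron D 2 = J(2 | |D|)` when `D ≡ 1 (mod 4)`. -/
private lemma kron_two_eq {D : ℤ} (hD1 : D % 4 = 1) :
    kron D 2 = J((2 : ℤ) | D.natAbs) := by
  set d := D.natAbs with hd
  have h84 : D % 8 % 4 = D % 4 := Int.emod_emod_of_dvd D (by norm_num)
  have h8lt : 0 ≤ D % 8 ∧ D % 8 < 8 := ⟨Int.emod_nonneg D (by norm_num), Int.emod_lt_of_pos D (by norm_num)⟩
  have hD8 : D % 8 = 1 ∨ D % 8 = 5 := by omega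
  have hcast : ((d : ℤ) = D) ∨ ((d : ℤ) = -D) := by
    rcases Int.natAbs_eq D with h | h
    · exact Or.inl h.symm
    · exact Or.inr (by rw [h]; ring)
  have hd8 : ((d % 8 : ℕ) : ℤ) = (d : ℤ) % 8 := by push_cast; ring_nf
  have hdodd : d % 2 = 1 := by
    have : ((d % 2 : ℕ) : ℤ) = (d : ℤ) % 2 := by push_cast; ring_nf
    have h2 : D % 2 = 1 := by omega
    rcases hcast with h | h <;> omega
  have hOdd : Odd d := Nat.odd_iff.mpr hdodd
  rw [jacobiSym.at_two hOdd, ZMod.χ₈_nat_eq_if_mod_eight]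
  have : d % 8 = 1 ∨ d % 8 = 7 ∨ d % 8 = 3 ∨ d % 8 = 5 := by
    rcases hcast with h | h <;> omega
  unfold kron
  rcases hD8 with h5 | h5 <;> have hd8' : d % 8 = 1 ∨ d % 8 = 7 ∨ d % 8 = 3 ∨ d % 8 = 5 := this
  · have : d % 8 = 1 ∨ d % 8 = 7 := by rcases hcast with h | h <;> omega
    rcases this with h' | h' <;> simp [h5, h', hdodd]
  · have : d % 8 = 5 ∨ d % 8 = 3 := by rcases hcast with h | h <;> omega
    rcases this with h' | h' <;> simp [h5, h', hdodd]

/-- Periodicity of `J(D | ·)` modulo `|D|` on odd arguments, for `D ≡ 0 (mod 4)`. -/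
private lemma jacobi_periodic_even {D : ℤ} (hD0 : D % 4 = 0) (hDne : D ≠ 0)
    {b b' : ℕ} (hb : Odd b) (hb' : Odd b') (h : b % D.natAbs = b' % D.natAbs) :
    J(D | b) = J(D | b') := by
  set d := D.natAbs with hd
  have hdne : d ≠ 0 := Int.natAbs_ne_zero.mpr hDne
  set e := d.factorization 2 with he
  set m := d / 2 ^ e with hm
  have hdm : 2 ^ e * m = d := Nat.ordProj_mul_ordCompl_eq_self d 2
  have hmo : Odd m := by
    have := Nat.not_dvd_ordCompl Nat.prime_two hdne
    exact Nat.odd_iff.mpr (Nat.two_dvd_ne_zero.mp this)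
  have h4d : 4 ∣ d := by
    have : (4 : ℤ) ∣ D := Int.dvd_of_emod_eq_zero hD0
    have := Int.natAbs_dvd_natAbs.mpr this
    simpa using this
  have he2 : 2 ≤ e := by
    have : (2 : ℕ) ^ 2 ∣ d := by norm_num; exact h4d
    exact (Nat.Prime.pow_dvd_iff_le_factorization Nat.prime_two hdne).mp this
  have hmd : m ∣ d := Nat.ordCompl_dvd d 2
  -- congruences
  have hmod4 : b % 4 = b' % 4 := by
    have : b % d % 4 = b' % d % 4 := by rw [h]
    rwa [Nat.mod_mod_of_dvd _ h4d, Nat.mod_mod_of_dvd _ h4d] at this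
  have hmodm : b % m = b' % m := by
    have : b % d % m = b' % d % m := by rw [h]
    rwa [Nat.mod_mod_of_dvd _ hmd, Nat.mod_mod_of_dvd _ hmd] at this
  have hb1 : b % 2 = 1 := Nat.odd_iff.mp hb
  have hb'1 : b' % 2 = 1 := Nat.odd_iff.mp hb'
  -- the χ₈ powers agree
  have hchi8 : (ZMod.χ₈ (b : ZMod 8)) ^ e = (ZMod.χ₈ (b' : ZMod 8)) ^ e := by
    rcases Nat.even_or_odd e with hee | hee
    · have h1 : (ZMod.χ₈ (b : ZMod 8)) ^ 2 = 1 := by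
        rw [ZMod.χ₈_nat_eq_if_mod_eight]
        have : b % 8 % 2 = 1 := by omega
        split_ifs <;> norm_num <;> omega
      have h2 : (ZMod.χ₈ (b' : ZMod 8)) ^ 2 = 1 := by
        rw [ZMod.χ₈_nat_eq_if_mod_eight]
        have : b' % 8 % 2 = 1 := by omega
        split_ifs <;> norm_num <;> omega
      obtain ⟨k, hk⟩ := hee
      rw [hk, ← two_mul, pow_mul, pow_mul, h1, h2]
    · have h8d : 8 ∣ d := by
        have : (2 : ℕ) ^ 3 ∣ 2 ^ e := pow_dvd_pow 2 (by
          rcases Nat.odd_iff.mp hee with h'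
          omega)
        calc (8 : ℕ) = 2 ^ 3 := by norm_num
        _ ∣ 2 ^ e := this
        _ ∣ d := hdm ▸ dvd_mul_right (2 ^ e) m
      have hmod8 : b % 8 = b' % 8 := by
        have : b % d % 8 = b' % d % 8 := by rw [h]
        rwa [Nat.mod_mod_of_dvd _ h8d, Nat.mod_mod_of_dvd _ h8d] at this
      have : ((b : ZMod 8)) = ((b' : ZMod 8)) := by
        rw [ZMod.natCast_eq_natCast_iff]
        exact hmod8
      rw [this]
  -- χ₄ agree
  have hchi4 : ZMod.χ₄ (b : ZMod 4) = ZMod.χ₄ (b' : ZMod 4) := by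
    have : ((b : ZMod 4)) = ((b' : ZMod 4)) := by
      rw [ZMod.natCast_eq_natCast_iff]; exact hmod4
    rw [this]
  -- reciprocity sign agrees
  have hsign : ((-1 : ℤ)) ^ (m / 2 * (b / 2)) = (-1) ^ (m / 2 * (b' / 2)) := by
    apply neg_one_pow_congr'
    have hb2 : b / 2 % 2 = b' / 2 % 2 := by omega
    conv_lhs => rw [Nat.mul_mod, hb2, ← Nat.mul_mod]
  -- J(b|m) agree
  have hflip : J((b : ℤ) | m) = J((b' : ℤ) | m) := by
    apply jacobiSym.mod_left'
    rw [← Int.natCast_mod b m, ← Int.natCast_mod b' m, hmodm]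
  -- now decompose D
  have hdecomp : ∀ c : ℕ, Odd c →
      J(((2 ^ e * m : ℕ) : ℤ) | c) = (ZMod.χ₈ (c : ZMod 8)) ^ e *
        ((-1 : ℤ)) ^ (m / 2 * (c / 2)) * J((c : ℤ) | m) := by
    intro c hc
    have : ((2 ^ e * m : ℕ) : ℤ) = (2 : ℤ) ^ e * (m : ℤ) := by push_cast; ring
    rw [this, jacobiSym.mul_left, jacobiSym.pow_left, jacobiSym.at_two hc,
      jacobiSym.quadratic_reciprocity hmo hc]
    ring
  rcases Int.natAbs_eq D with hsgn | hsgn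
  · rw [show D = ((d : ℕ) : ℤ) from hsgn, ← hdm]
    rw [hdecomp b hb, hdecomp b' hb', hchi8, hsign, hflip]
  · have hDd : D = -((d : ℕ) : ℤ) := by rw [hd]; exact hsgn
    rw [hDd, jacobiSym.neg _ hb, jacobiSym.neg _ hb', ← hdm,
      hdecomp b hb, hdecomp b' hb', hchi8, hsign, hflip, hchi4]

/-- Each value `kron D q` is `±1` when `gcd(|D|, q) = 1`, `q ≠ 0`. -/
private lemma kron_pm {D : ℤ} (hD : D % 4 = 0 ∨ D % 4 = 1) {q : ℕ} (hq : q ≠ 0)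
    (hcop : Nat.Coprime D.natAbs q) : kron D q = 1 ∨ kron D q = -1 := by
  by_cases h2 : q = 2
  · subst h2
    have hdodd : ¬ (2 ∣ D.natAbs) := by
      intro hdvd
      have h1 : Nat.gcd D.natAbs 2 = 1 := hcop
      have h2 : 2 ∣ Nat.gcd D.natAbs 2 := Nat.dvd_gcd hdvd dvd_rfl
      omega
    have hDodd : D % 2 = 1 := by
      rcases Int.even_or_odd D with he | ho
      · exfalso; exact hdodd (by
          have : (2 : ℤ) ∣ D := he.two_dvd
          have := Int.natAbs_dvd_natAbs.mpr this
          simpa using this)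
      · omega
    have hD1 : D % 4 = 1 := by
      rcases hD with h | h
      · exfalso
        have : D % 4 % 2 = D % 2 := Int.emod_emod_of_dvd D (by norm_num)
        omega
      · exact h
    have h84 : D % 8 % 4 = D % 4 := Int.emod_emod_of_dvd D (by norm_num)
    have h8lt : 0 ≤ D % 8 ∧ D % 8 < 8 :=
      ⟨Int.emod_nonneg D (by norm_num), Int.emod_lt_of_pos D (by norm_num)⟩
    have hD8 : D % 8 = 1 ∨ D % 8 = 5 := by omega
    unfold kron
    rcases hD8 with h | h <;> simp [h]
  · have : kron D q = J(D | q) := by unfold kron; rw [if_neg h2]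
    rw [this]
    apply jacobiSym.eq_one_or_neg_one
    have : Int.gcd D q = Nat.gcd D.natAbs q := by
      unfold Int.gcd; simp
    rw [this]; exact hcop

/-- Product of `±1` values equals `(-1)^(number of `-1`s)`. -/
private lemma list_prod_pm (l : List ℤ) (h : ∀ x ∈ l, x = 1 ∨ x = -1) :
    l.prod = (-1) ^ (l.filter (· = -1)).length := by
  induction l with
  | nil => simp
  | cons a t ih =>
    have iht := ih (fun x hx => h x (List.mem_cons_of_mem a hx))
    rcases h a List.mem_cons_self with rfl | rfl
    · rw [List.prod_cons, List.filter_cons, if_neg (by norm_num), iht, one_mul]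
    · rw [List.prod_cons, List.filter_cons, if_pos (by norm_num), List.length_cons, iht,
        pow_succ]
      ring

private lemma kp_eq_pow {D : ℤ} (hD : D % 4 = 0 ∨ D % 4 = 1) {n : ℕ}
    (hcop : Nat.Coprime D.natAbs n) :
    ((n.primeFactorsList).map (kron D)).prod = (-1) ^ OmegaMinus D n := by
  rw [list_prod_pm _ (by
    intro x hx
    obtain ⟨q, hq, rfl⟩ := List.mem_map.mp hx
    exact kron_pm hD (Nat.prime_of_mem_primeFactorsList hq).ne_zero
      (Nat.Coprime.coprime_dvd_right (Nat.dvd_of_mem_primeFactorsList hq) hcop))]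
  congr 1
  rw [OmegaMinus, List.filter_map, List.length_map]
  rfl

/-- For `D ≡ 1 (mod 4)`, `∏ kron D q over prime factors of n` is `J(n | |D|)`. -/
private lemma kp_odd_disc {D : ℤ} (hD1 : D % 4 = 1) {n : ℕ} (hn : n ≠ 0) :
    ((n.primeFactorsList).map (kron D)).prod = J((n : ℤ) | D.natAbs) := by
  conv_rhs => rw [← Nat.prod_primeFactorsList hn]
  rw [Nat.cast_list_prod, jacobiSym.list_prod_left, List.map_map]
  congr 1
  apply List.map_congr_left
  intro q hq
  have hqp := Nat.prime_of_mem_primeFactorsList hq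
  by_cases h2 : q = 2
  · subst h2; exact kron_two_eq hD1
  · have hqo : Odd q := hqp.odd_of_ne_two h2
    have : kron D q = J(D | q) := by unfold kron; rw [if_neg h2]
    rw [Function.comp_apply, this, jacobi_flip hD1 hqo]

/-- For odd `n`, `∏ kron D q over prime factors of n` is `J(D | n)`. -/
private lemma kp_odd_arg (D : ℤ) {n : ℕ} (hn : Odd n) :
    ((n.primeFactorsList).map (kron D)).prod = J(D | n) := by
  conv_rhs => rw [← Nat.prod_primeFactorsList hn.pos.ne']
  rw [jacobiSym.list_prod_right (fun q hq => (Nat.prime_of_mem_primeFactorsList hq).ne_zero)]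
  congr 1
  apply List.map_congr_left
  intro q hq
  have h2 : q ≠ 2 := by
    intro h; subst h
    have := Nat.dvd_of_mem_primeFactorsList hq
    rw [Nat.odd_iff] at hn
    omega
  unfold kron; rw [if_neg h2]

theorem stmt5 (D : ℤ) (hD : D % 4 = 0 ∨ D % 4 = 1) (hns : ¬ IsSquare D)
    (d : ℕ) (hd : d = D.natAbs) (s₁ s₂ : ℕ) (hs₁ : 0 < s₁) (hs₂ : 0 < s₂)
    (hgcd : Nat.gcd (d * s₁) s₂ = 1) (hodd : Odd (OmegaMinus D s₂)) :
    ∃ q : ℕ, q.Prime ∧ kron D q = -1 ∧ q ∣ (d * s₁ + s₂) ∧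
      Nat.gcd q (s₁ * s₂) = 1 ∧ q ≤ d * s₁ + s₂ := by
  have hDne : D ≠ 0 := fun h => hns (h ▸ ⟨0, by ring⟩)
  have hdne : d ≠ 0 := hd ▸ Int.natAbs_ne_zero.mpr hDne
  set M := d * s₁ + s₂ with hM
  have hMpos : 0 < M := by positivity
  have cop_dsM : Nat.Coprime (d * s₁) M := by
    rw [hM, add_comm, Nat.coprime_add_self_right]
    exact hgcd
  have cop_dM : Nat.Coprime d M := Nat.Coprime.coprime_dvd_left (dvd_mul_right d s₁) cop_dsM
  have cop_ds₂ : Nat.Coprime d s₂ := Nat.Coprime.coprime_dvd_left (dvd_mul_right d s₁) hgcd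
  -- the key character computation
  have key : ((M.primeFactorsList).map (kron D)).prod
      = ((s₂.primeFactorsList).map (kron D)).prod := by
    rcases hD with hD0 | hD1
    · -- D ≡ 0 mod 4 : both M and s₂ are odd
      have h2d : 2 ∣ d := by
        have : (2 : ℤ) ∣ D := dvd_trans (by norm_num) (Int.dvd_of_emod_eq_zero hD0)
        have := Int.natAbs_dvd_natAbs.mpr this
        simpa [hd] using this
      have hs₂odd : Odd s₂ := by
        rcases Nat.even_or_odd s₂ with he | ho
        · exfalso
          have h1 : 2 ∣ Nat.gcd (d * s₁) s₂ :=
            Nat.dvd_gcd (Dvd.dvd.mul_right h2d s₁) he.two_dvd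
          omega
        · exact ho
      have hModd : Odd M := by
        rw [hM]
        exact (Nat.even_mul.mpr (Or.inl (even_iff_two_dvd.mpr h2d))).add_odd hs₂odd
      rw [kp_odd_arg D hModd, kp_odd_arg D hs₂odd]
      apply jacobi_periodic_even hD0 hDne hModd hs₂odd
      rw [hM, ← hd, add_comm, Nat.add_mul_mod_self_left]
    · -- D ≡ 1 mod 4
      rw [kp_odd_disc hD1 hMpos.ne', kp_odd_disc hD1 hs₂.ne']
      apply jacobiSym.mod_left'
      have hMc : ((M : ℤ)) = (s₂ : ℤ) + (D.natAbs : ℤ) * (s₁ : ℤ) := by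
        rw [hM, hd]; push_cast; ring
      rw [hMc, Int.add_mul_emod_self_left]
  have hs₂val : ((s₂.primeFactorsList).map (kron D)).prod = -1 := by
    rw [kp_eq_pow hD (hd ▸ cop_ds₂), hodd.neg_one_pow]
  rw [hs₂val] at key
  -- extract a prime factor with kron = -1
  have hex : ∃ q ∈ M.primeFactorsList, kron D q = -1 := by
    by_contra hcon
    push_neg at hcon
    have : ((M.primeFactorsList).map (kron D)).prod = 1 := by
      apply List.prod_eq_one
      intro x hx
      obtain ⟨q, hq, rfl⟩ := List.mem_map.mp hx
      rcases kron_pm hD (Nat.prime_of_mem_primeFactorsList hq).ne_zero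
        (Nat.Coprime.coprime_dvd_right (Nat.dvd_of_mem_primeFactorsList hq)
          (hd ▸ cop_dM)) with h | h
      · exact h
      · exact absurd h (hcon q hq)
    rw [this] at key
    norm_num at key
  obtain ⟨q, hqmem, hqk⟩ := hex
  have hqp : q.Prime := Nat.prime_of_mem_primeFactorsList hqmem
  have hqM : q ∣ M := Nat.dvd_of_mem_primeFactorsList hqmem
  refine ⟨q, hqp, hqk, hqM, ?_, Nat.le_of_dvd hMpos hqM⟩
  have hcq : Nat.Coprime q (s₁ * s₂) := by
    rw [Nat.Prime.coprime_iff_not_dvd hqp]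
    intro hdvd
    rcases (Nat.Prime.dvd_mul hqp).mp hdvd with h1 | h2
    · have hqds : q ∣ d * s₁ := Dvd.dvd.mul_left h1 d
      have hqs₂ : q ∣ s₂ := by
        have hss : s₂ = M - d * s₁ := by omega
        rw [hss]; exact Nat.dvd_sub hqM hqds
      have hg : q ∣ Nat.gcd (d * s₁) s₂ := Nat.dvd_gcd hqds hqs₂
      rw [hgcd] at hg
      exact (Nat.Prime.one_lt hqp).ne' (Nat.dvd_one.mp hg)
    · have hqds : q ∣ d * s₁ := by
        have hss : d * s₁ = M - s₂ := by omega
        rw [hss]; exact Nat.dvd_sub hqM h2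
      have hg : q ∣ Nat.gcd (d * s₁) s₂ := Nat.dvd_gcd hqds h2
      rw [hgcd] at hg
      exact (Nat.Prime.one_lt hqp).ne' (Nat.dvd_one.mp hg)
  exact hcq
end

section
/- Let D ≡ 0 or 1 (mod 4) be a non-square integer, d = |D|, and q₁ < q₂ < ⋯ the primes with Kronecker symbol (D/q) = -1. Let n₀ be the turning index (q₁⋯q_{n₀} < d < q₁⋯q_{n₀+1}). If either (D < 0 and n₀ is even) or (D > 0 and n₀ is odd), then q_{n₀+1} ≤ d - q₁q₂⋯q_{n₀}. -/
open ZMod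


/-- product of `kron D` over the prime factorization -/
def Kr (D : ℤ) (n : ℕ) : ℤ := (n.primeFactorsList.map (kron D)).prod

lemma kron_odd_prime (D : ℤ) {p : ℕ} (hp2 : p ≠ 2) :
    kron D p = jacobiSym D p := by simp [kron, hp2]

lemma Kr_one (D : ℤ) : Kr D 1 = 1 := by simp [Kr]

lemma Kr_prime (D : ℤ) {p : ℕ} (hp : p.Prime) : Kr D p = kron D p := by
  simp [Kr, Nat.primeFactorsList_prime hp]

lemma Kr_mul (D : ℤ) {m n : ℕ} (hm : m ≠ 0) (hn : n ≠ 0) :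
    Kr D (m * n) = Kr D m * Kr D n := by
  unfold Kr
  rw [← List.prod_append, ← List.map_append]
  exact List.Perm.prod_eq (List.Perm.map _ (Nat.perm_primeFactorsList_mul hm hn))

lemma Kr_odd (D : ℤ) : ∀ n : ℕ, Odd n → Kr D n = jacobiSym D n := by
  intro n
  induction n using Nat.strong_induction_on with
  | _ n ih =>
    intro hn
    have hn0 : n ≠ 0 := by rintro rfl; simp at hn
    rcases eq_or_ne n 1 with rfl | h1
    · simp [Kr_one, jacobiSym.one_right]
    have hp := Nat.minFac_prime h1
    obtain ⟨k, hk⟩ := n.minFac_dvd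
    have hk0 : k ≠ 0 := by rintro rfl; simp at hk; exact hn0 hk
    have hklt : k < n := by
      rw [hk]
      exact lt_mul_of_one_lt_left (Nat.pos_of_ne_zero hk0) hp.one_lt
    have hkodd : Odd k := by
      rcases Nat.even_or_odd k with he | ho
      · exfalso; rw [hk] at hn; exact (Nat.not_even_iff_odd.2 hn) (Nat.even_mul.2 (Or.inr he))
      · exact ho
    rw [hk, Kr_mul D hp.ne_zero hk0, Kr_prime D hp, ih k hklt hkodd,
      jacobiSym.mul_right' D hp.ne_zero hk0,
      kron_odd_prime D (by intro h2; rw [hk, h2] at hn; exact (Nat.not_even_iff_odd.2 hn) (Nat.even_mul.2 (Or.inl even_two)))]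

lemma Kr_eq_of_primes {D : ℤ} {f : ℕ → ℤ} (hf1 : f 1 = 1)
    (hfmul : ∀ m n : ℕ, m ≠ 0 → n ≠ 0 → f (m * n) = f m * f n)
    (hfp : ∀ p : ℕ, p.Prime → kron D p = f p) : ∀ n : ℕ, n ≠ 0 → Kr D n = f n := by
  intro n
  induction n using Nat.strong_induction_on with
  | _ n ih =>
    intro hn0
    rcases eq_or_ne n 1 with rfl | h1
    · simp [Kr_one, hf1]
    have hp := Nat.minFac_prime h1
    obtain ⟨k, hk⟩ := n.minFac_dvd
    have hk0 : k ≠ 0 := by rintro rfl; simp at hk; exact hn0 hk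
    have hklt : k < n := by
      rw [hk]
      exact lt_mul_of_one_lt_left (Nat.pos_of_ne_zero hk0) hp.one_lt
    rw [hk, Kr_mul D hp.ne_zero hk0, Kr_prime D hp, ih k hklt hk0,
      hfmul _ _ hp.ne_zero hk0, hfp _ hp]

lemma Kr_prod (D : ℤ) (f : ℕ → ℕ) (n : ℕ) (hf : ∀ j, j < n → f j ≠ 0) :
    Kr D (∏ j ∈ Finset.range n, f j) = ∏ j ∈ Finset.range n, Kr D (f j) := by
  induction n with
  | zero => simp [Kr_one]
  | succ n ih =>
    rw [Finset.prod_range_succ, Finset.prod_range_succ,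
      Kr_mul D (Finset.prod_ne_zero_iff.2 fun j hj => hf j (lt_of_lt_of_le (Finset.mem_range.1 hj) (Nat.le_succ n))) (hf n (Nat.lt_succ_self n)),
      ih (fun j hj => hf j (hj.trans (Nat.lt_succ_self n)))]

lemma Kr_flip_odd {D : ℤ} (hD1 : D % 4 = 1) :
    ∀ n : ℕ, n ≠ 0 → Kr D n = jacobiSym (n : ℤ) D.natAbs := by
  have hD0 : D ≠ 0 := by omega
  set d := D.natAbs with hd
  have hdodd : Odd d := by rw [Nat.odd_iff]; omega
  refine Kr_eq_of_primes (by simp [jacobiSym.one_left]) ?_ ?_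
  · intro m n hm hn; push_cast; rw [jacobiSym.mul_left]
  · intro p hp
    rcases eq_or_ne p 2 with rfl | hp2
    · have h8 : D % 8 = 1 ∨ D % 8 = 5 := by omega
      have hd2 : ¬ d % 2 = 0 := by omega
      have : ((2 : ℕ) : ℤ) = (2 : ℤ) := by norm_num
      rw [this, jacobiSym.at_two hdodd, ZMod.χ₈_nat_eq_if_mod_eight, if_neg hd2]
      rcases h8 with h8 | h8
      · have : d % 8 = 1 ∨ d % 8 = 7 := by omega
        rw [if_pos this]; simp [kron, h8]
      · have hne : ¬ (d % 8 = 1 ∨ d % 8 = 7) := by omega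
        rw [if_neg hne]; simp [kron, h8]
    · rw [kron_odd_prime D hp2]
      have hpodd : Odd p := hp.odd_of_ne_two hp2
      rcases lt_or_gt_of_ne hD0 with hneg | hpos
      · -- D < 0, D = -d, d % 4 = 3
        have hDd : D = -(d : ℤ) := by omega
        have hd4 : d % 4 = 3 := by omega
        rw [hDd, jacobiSym.neg _ hpodd,
          jacobiSym.quadratic_reciprocity hdodd hpodd]
        have hd2odd : Odd (d / 2) := by rw [Nat.odd_iff]; omega
        rw [pow_mul, Odd.neg_one_pow hd2odd, ZMod.χ₄_eq_neg_one_pow (Nat.odd_iff.1 hpodd)]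
        rw [← mul_assoc, ← mul_pow]
        norm_num
      · -- D > 0, d = D, d % 4 = 1
        have hDd : D = (d : ℤ) := by omega
        have hd4 : d % 4 = 1 := by omega
        rw [hDd, jacobiSym.quadratic_reciprocity_one_mod_four hd4 hpodd]

lemma chi8_pm {n : ℕ} (hn : n % 2 = 1) : χ₈ n = 1 ∨ χ₈ n = -1 := by
  rw [ZMod.χ₈_nat_eq_if_mod_eight, if_neg (by omega)]
  split <;> simp

lemma flip_even {D : ℤ} (hD0 : D % 4 = 0) (hDne : D ≠ 0) {ε : ℤ}
    (hε : ε = 1 ∨ ε = -1) (hDε : D = ε * D.natAbs) {Q m : ℕ}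
    (hQodd : Q % 2 = 1) (hQcop : Nat.Coprime Q D.natAbs)
    (hsum : m + Q = D.natAbs) :
    jacobiSym D m = ε * jacobiSym D Q := by
  set d := D.natAbs with hd
  have hdne : d ≠ 0 := Int.natAbs_ne_zero.mpr hDne
  have h4d : 4 ∣ d := by omega
  set e := d.factorization 2 with he
  set d' := d / 2 ^ e with hd'
  have hfact : 2 ^ e * d' = d := Nat.ordProj_mul_ordCompl_eq_self d 2
  have hd'2 : ¬ 2 ∣ d' := Nat.not_dvd_ordCompl Nat.prime_two hdne
  have hd'odd : Odd d' := Nat.odd_iff.2 (by omega)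
  have h2e : 2 ≤ e := by
    have : 2 ^ 2 ∣ d := by norm_num; exact h4d
    exact (Nat.Prime.pow_dvd_iff_le_factorization Nat.prime_two hdne).1 this
  have hmodd : m % 2 = 1 := by omega
  have hm4Q4 : m % 4 + Q % 4 = 4 := by omega
  have hDfact : D = ε * ((2 : ℤ) ^ e * (d' : ℤ)) := by
    rw [hDε]; congr 1; push_cast [← hfact]; ring
  have expand : ∀ n : ℕ, n % 2 = 1 →
      jacobiSym D n = jacobiSym ε n * (χ₈ n) ^ e *
        ((-1 : ℤ) ^ (d' / 2 * (n / 2)) * jacobiSym (n : ℤ) d') := by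
    intro n hn
    have hnodd : Odd n := Nat.odd_iff.2 hn
    rw [hDfact, jacobiSym.mul_left, jacobiSym.mul_left, jacobiSym.pow_left,
      jacobiSym.at_two hnodd, jacobiSym.quadratic_reciprocity hd'odd hnodd, mul_assoc]
  -- the four pieces
  have hQd' : Nat.Coprime Q d' := hQcop.coprime_dvd_right (Dvd.intro_left _ hfact)
  have piece4 : jacobiSym (m : ℤ) d' = χ₄ d' * jacobiSym (Q : ℤ) d' := by
    have hm : (m : ℤ) = -(Q : ℤ) + (d' : ℤ) * 2 ^ e := by
      have h1 : ((m + Q : ℕ) : ℤ) = ((2 ^ e * d' : ℕ) : ℤ) := by rw [hsum, hfact]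
      push_cast at h1; linarith
    rw [jacobiSym.mod_left' (show (m : ℤ) % d' = (-(Q : ℤ)) % d' by
        rw [hm, Int.add_mul_emod_self_left]),
      jacobiSym.neg _ hd'odd]
  have piece1 : jacobiSym ε m * jacobiSym ε Q = ε := by
    rcases hε with rfl | rfl
    · simp [jacobiSym.one_left]
    · rw [jacobiSym.at_neg_one (Nat.odd_iff.2 hmodd), jacobiSym.at_neg_one (Nat.odd_iff.2 hQodd)]
      rw [ZMod.χ₄_nat_eq_if_mod_four, ZMod.χ₄_nat_eq_if_mod_four]
      rcases (show m % 4 = 1 ∧ Q % 4 = 3 ∨ m % 4 = 3 ∧ Q % 4 = 1 by omega) with ⟨h1, h2⟩ | ⟨h1, h2⟩ <;>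
        simp [h1, h2, hmodd, hQodd]
  have piece2 : (χ₈ m) ^ e * (χ₈ Q) ^ e = 1 := by
    rw [← mul_pow]
    rcases Nat.even_or_odd e with hee | heo
    · rcases chi8_pm hmodd with h1 | h1 <;> rcases chi8_pm hQodd with h2 | h2 <;>
        rw [h1, h2] <;> norm_num [hee.neg_one_pow]
    · have h8d : 8 ∣ d := by
        have he2 := Nat.odd_iff.1 heo
        have : (2:ℕ) ^ 3 ∣ 2 ^ e := pow_dvd_pow 2 (by omega)
        calc (8:ℕ) = 2 ^ 3 := by norm_num
        _ ∣ 2 ^ e := this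
        _ ∣ d := ⟨d', hfact.symm⟩
      have hmQ : χ₈ m = χ₈ Q := by
        rw [ZMod.χ₈_nat_eq_if_mod_eight, ZMod.χ₈_nat_eq_if_mod_eight]
        rcases (show m % 8 = 1 ∧ Q % 8 = 7 ∨ m % 8 = 3 ∧ Q % 8 = 5 ∨ m % 8 = 5 ∧ Q % 8 = 3 ∨
            m % 8 = 7 ∧ Q % 8 = 1 by omega) with ⟨h1,h2⟩|⟨h1,h2⟩|⟨h1,h2⟩|⟨h1,h2⟩ <;>
          simp [h1, h2, hmodd, hQodd]
      rw [hmQ]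
      rcases chi8_pm hQodd with h1 | h1 <;> rw [h1] <;> norm_num
  have piece3 : (-1 : ℤ) ^ (d' / 2 * (m / 2)) * (-1 : ℤ) ^ (d' / 2 * (Q / 2)) * χ₄ d' = 1 := by
    rw [← pow_add, ← mul_add]
    have hd'm2 : d' % 2 = 1 := Nat.odd_iff.1 hd'odd
    have hoddn : (m / 2 + Q / 2) % 2 = 1 := by omega
    have hodd : Odd (m / 2 + Q / 2) := Nat.odd_iff.2 hoddn
    rcases Nat.even_or_odd (d' / 2) with hev | hod
    · have hev2 : d' / 2 % 2 = 0 := Nat.even_iff.1 hev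
      rw [(hev.mul_right _).neg_one_pow, ZMod.χ₄_nat_one_mod_four (by omega), mul_one]
    · have hod2 : d' / 2 % 2 = 1 := Nat.odd_iff.1 hod
      rw [(hod.mul hodd).neg_one_pow, ZMod.χ₄_nat_three_mod_four (by omega)]
      norm_num
  have hsq : jacobiSym (Q : ℤ) d' ^ 2 = 1 := jacobiSym.sq_one (by
    rw [Int.gcd_natCast_natCast]; exact hQd')
  have main : jacobiSym D m * jacobiSym D Q = ε := by
    rw [expand m hmodd, expand Q hQodd, piece4]
    calc jacobiSym ε m * χ₈ ↑m ^ e * ((-1:ℤ) ^ (d' / 2 * (m / 2)) * (χ₄ ↑d' * jacobiSym (Q:ℤ) d')) *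
        (jacobiSym ε Q * χ₈ ↑Q ^ e * ((-1:ℤ) ^ (d' / 2 * (Q / 2)) * jacobiSym (Q:ℤ) d'))
        = (jacobiSym ε m * jacobiSym ε Q) * ((χ₈ ↑m) ^ e * (χ₈ ↑Q) ^ e) *
          ((-1:ℤ) ^ (d' / 2 * (m / 2)) * (-1:ℤ) ^ (d' / 2 * (Q / 2)) * χ₄ ↑d') *
          (jacobiSym (Q:ℤ) d' ^ 2) := by ring
      _ = ε := by rw [piece1, piece2, piece3, hsq]; ring
  have hsqD : jacobiSym D Q * jacobiSym D Q = 1 := by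
    have := jacobiSym.sq_one (a := D) (b := Q) (by
      rw [Int.gcd]; exact Nat.Coprime.symm hQcop)
    rwa [sq] at this
  calc jacobiSym D m = jacobiSym D m * (jacobiSym D Q * jacobiSym D Q) := by rw [hsqD, mul_one]
    _ = (jacobiSym D m * jacobiSym D Q) * jacobiSym D Q := by ring
    _ = ε * jacobiSym D Q := by rw [main]

lemma kron_eq_zero_of_dvd {D : ℤ} {p : ℕ} (hp : p.Prime) (hdvd : p ∣ D.natAbs) :
    kron D p = 0 := by
  rcases eq_or_ne p 2 with rfl | hp2
  · show (if (2:ℕ) = 2 then (if D % 8 = 1 then 1 else if D % 8 = 5 then -1 else 0) else _) = 0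
    rw [if_pos rfl, if_neg (by omega), if_neg (by omega)]
  · rw [kron_odd_prime D hp2]
    refine jacobiSym.eq_zero_iff.2 ⟨hp.ne_zero, fun h => ?_⟩
    have h2 : p ∣ Int.gcd D p := Nat.dvd_gcd hdvd dvd_rfl
    rw [h, Nat.dvd_one] at h2
    exact hp.one_lt.ne' h2

lemma kron_trichotomy (D : ℤ) {p : ℕ} (hp : p.Prime) :
    kron D p = 0 ∨ kron D p = 1 ∨ kron D p = -1 := by
  rcases eq_or_ne p 2 with rfl | hp2
  · unfold kron
    rw [if_pos rfl]
    split_ifs <;> simp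
  · rw [kron_odd_prime D hp2]; exact jacobiSym.trichotomy D p

lemma list_prod_of_zero_one : ∀ l : List ℤ, (∀ x ∈ l, x = 0 ∨ x = 1) →
    l.prod = 0 ∨ l.prod = 1 := by
  intro l
  induction l with
  | nil => intro _; exact Or.inr rfl
  | cons a l ih =>
    intro h
    rw [List.prod_cons]
    rcases h a List.mem_cons_self with rfl | rfl
    · simp
    · rw [one_mul]; exact ih fun x hx => h x (List.mem_cons_of_mem _ hx)

theorem stmt11 (D : ℤ) (hD : D % 4 = 0 ∨ D % 4 = 1) (hns : ¬ IsSquare D)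
    (d : ℕ) (hd : d = D.natAbs) (n₀ : ℕ) (hn₀ : 1 ≤ n₀)
    (hlt : (∏ j ∈ Finset.range n₀, Nat.nth (fun q => q.Prime ∧ kron D q = -1) j) < d)
    (hgt : d < ∏ j ∈ Finset.range (n₀ + 1), Nat.nth (fun q => q.Prime ∧ kron D q = -1) j)
    (hpar : (D < 0 ∧ Even n₀) ∨ (0 < D ∧ Odd n₀)) :
    Nat.nth (fun q => q.Prime ∧ kron D q = -1) n₀ ≤
      d - ∏ j ∈ Finset.range n₀, Nat.nth (fun q => q.Prime ∧ kron D q = -1) j := by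
  classical
  set P : ℕ → Prop := fun q => q.Prime ∧ kron D q = -1 with hP
  set qf : ℕ → ℕ := Nat.nth P with hqf
  set Q : ℕ := ∏ j ∈ Finset.range n₀, qf j with hQdef
  have hDne : D ≠ 0 := by rintro rfl; exact hns ⟨0, by norm_num⟩
  have hcard : ∀ hf : (setOf P).Finite, n₀ < hf.toFinset.card := by
    intro hf
    by_contra hc
    push_neg at hc
    have h0 : Nat.nth P n₀ = 0 := Nat.nth_of_card_le hf hc
    rw [Finset.prod_range_succ, show qf n₀ = 0 from h0, mul_zero] at hgt
    omega
  have hmem : ∀ j, j ≤ n₀ → P (qf j) := fun j hj =>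
    Nat.nth_mem j (fun hf => lt_of_le_of_lt hj (hcard hf))
  have hqne : ∀ j, j < n₀ → qf j ≠ 0 := fun j hj => ((hmem j hj.le).1).ne_zero
  have hQ0 : Q ≠ 0 := Finset.prod_ne_zero_iff.2 fun j hj => hqne j (Finset.mem_range.1 hj)
  set m : ℕ := d - Q with hmdef
  have hQd : Q < d := hlt
  have hm : m + Q = d := Nat.sub_add_cancel hQd.le
  have hm0 : m ≠ 0 := by omega
  have hKrQ : Kr D Q = (-1) ^ n₀ := by
    rw [hQdef, Kr_prod D qf n₀ hqne]
    rw [Finset.prod_congr rfl fun j hj => by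
      rw [Kr_prime D (hmem j (Finset.mem_range.1 hj).le).1,
        (hmem j (Finset.mem_range.1 hj).le).2]]
    rw [Finset.prod_const, Finset.card_range]
  have hcop : Nat.Coprime Q D.natAbs := by
    by_contra hnc
    obtain ⟨p, hp, hpQ, hpd⟩ := Nat.Prime.not_coprime_iff_dvd.1 hnc
    obtain ⟨j, hj, hdvd⟩ := hp.prime.exists_mem_finset_dvd hpQ
    have hPj := hmem j (Finset.mem_range.1 hj).le
    have heq : p = qf j := (Nat.prime_dvd_prime_iff_eq hp hPj.1).1 hdvd
    have := hPj.2
    rw [← heq, kron_eq_zero_of_dvd hp hpd] at this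
    norm_num at this
  have key : Kr D m = -1 := by
    rcases hD with hD0 | hD1
    · -- D even
      have hQodd : Q % 2 = 1 := by
        have h2Q : ¬ 2 ∣ Q := by
          intro h2
          obtain ⟨j, hj, hdvd⟩ := Nat.prime_two.prime.exists_mem_finset_dvd h2
          have hPj := hmem j (Finset.mem_range.1 hj).le
          have heq : 2 = qf j := (Nat.prime_dvd_prime_iff_eq Nat.prime_two hPj.1).1 hdvd
          have := hPj.2
          rw [← heq] at this
          unfold kron at this
          rw [if_pos rfl, if_neg (by omega), if_neg (by omega)] at this
          norm_num at this
        omega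
      have h4d : (4 : ℕ) ∣ D.natAbs := by omega
      have hmodd : Odd m := by rw [Nat.odd_iff]; omega
      have hsum : m + Q = D.natAbs := by rw [hm, hd]
      rw [Kr_odd D m hmodd, Kr_odd D Q (Nat.odd_iff.2 hQodd)] at *
      rcases hpar with ⟨hneg, hev⟩ | ⟨hpos, hod⟩
      · rw [flip_even hD0 hDne (Or.inr rfl) (by omega) hQodd hcop hsum, hKrQ,
          hev.neg_one_pow]
        norm_num
      · rw [flip_even hD0 hDne (Or.inl rfl) (by omega) hQodd hcop hsum, hKrQ,
          hod.neg_one_pow]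
        norm_num
    · -- D odd
      have hdodd : Odd D.natAbs := by rw [Nat.odd_iff]; omega
      have hflipQ : Kr D Q = jacobiSym (Q : ℤ) D.natAbs := Kr_flip_odd hD1 Q hQ0
      rw [Kr_flip_odd hD1 m hm0]
      have hcast : (m : ℤ) = -(Q : ℤ) + (D.natAbs : ℤ) * 1 := by omega
      rw [jacobiSym.mod_left' (show (m : ℤ) % D.natAbs = (-(Q : ℤ)) % D.natAbs by
        rw [hcast, Int.add_mul_emod_self_left]), jacobiSym.neg _ hdodd,
        ← hflipQ, hKrQ]
      rcases hpar with ⟨hneg, hev⟩ | ⟨hpos, hod⟩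
      · rw [ZMod.χ₄_nat_three_mod_four (by omega), hev.neg_one_pow]
        norm_num
      · rw [ZMod.χ₄_nat_one_mod_four (by omega), hod.neg_one_pow]
        norm_num
  -- extract a prime factor of m with kron = -1
  have hex : ∃ r ∈ m.primeFactorsList, kron D r = -1 := by
    by_contra hnone
    push_neg at hnone
    have : Kr D m = 0 ∨ Kr D m = 1 := by
      refine list_prod_of_zero_one _ fun x hx => ?_
      obtain ⟨r, hr, rfl⟩ := List.mem_map.1 hx
      have hrp := Nat.prime_of_mem_primeFactorsList hr
      rcases kron_trichotomy D hrp with h | h | h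
      · exact Or.inl h
      · exact Or.inr h
      · exact absurd h (hnone r hr)
    rw [key] at this
    norm_num at this
  obtain ⟨r, hrmem, hrk⟩ := hex
  have hrp : r.Prime := Nat.prime_of_mem_primeFactorsList hrmem
  have hrdvd : r ∣ m := Nat.dvd_of_mem_primeFactorsList hrmem
  have hrQ : ¬ r ∣ Q := by
    intro hdvd
    have hrd : r ∣ D.natAbs := by rw [← hd, ← hm]; exact dvd_add hrdvd hdvd
    rw [kron_eq_zero_of_dvd hrp hrd] at hrk
    norm_num at hrk
  have hrP : P r := ⟨hrp, hrk⟩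
  have hnthc : Nat.nth P (Nat.count P r) = r := Nat.nth_count hrP
  have hkge : n₀ ≤ Nat.count P r := by
    by_contra hc
    push_neg at hc
    exact hrQ (hnthc ▸ Finset.dvd_prod_of_mem qf (Finset.mem_range.2 hc))
  calc Nat.nth P n₀ ≤ Nat.nth P (Nat.count P r) :=
        Nat.nth_le_nth' hkge (fun hf => Nat.count_lt_card hf hrP)
    _ = r := hnthc
    _ ≤ m := Nat.le_of_dvd (Nat.pos_of_ne_zero hm0) hrdvd
end
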